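/- Let N, R be ℓ×ℓ real matrices and set G = N Nᵀ + R − Rᵀ. Then for every t ≥ 0, ∫_0^t exp(G s / 2) · N Nᵀ · exp(Gᵀ s / 2) ds = exp(G t / 2) · exp(Gᵀ t / 2) − I, where I is the ℓ×ℓ identity matrix. -/

import Mathlib

open MeasureTheory Matrix

section Aux
attribute [local instance] Matrix.linftyOpNormedRing Matrix.linftyOpNormedAlgebra

/-- With `G = N Nᵀ + R - Rᵀ`, for every `t ≥ 0` one has (entrywise)
`∫_0^t exp(Gs/2) N Nᵀ exp(Gᵀs/2) ds = exp(Gt/2) exp(Gᵀt/2) - I`. -/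
theorem integral_exp_nnt_exp_transpose
    {ℓ : ℕ} (N R : Matrix (Fin ℓ) (Fin ℓ) ℝ) :
    ∀ t : ℝ, 0 ≤ t → ∀ i j : Fin ℓ,
      (∫ s in (0 : ℝ)..t,
        (NormedSpace.exp ((s / 2) • (N * Nᵀ + R - Rᵀ)) * (N * Nᵀ) *
          NormedSpace.exp ((s / 2) • (N * Nᵀ + R - Rᵀ)ᵀ)) i j) =
      (NormedSpace.exp ((t / 2) • (N * Nᵀ + R - Rᵀ)) *
        NormedSpace.exp ((t / 2) • (N * Nᵀ + R - Rᵀ)ᵀ) -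
        (1 : Matrix (Fin ℓ) (Fin ℓ) ℝ)) i j := by
  intro t _ i j
  set G : Matrix (Fin ℓ) (Fin ℓ) ℝ := N * Nᵀ + R - Rᵀ with hG
  set A : Matrix (Fin ℓ) (Fin ℓ) ℝ := (2⁻¹ : ℝ) • G with hA
  have hsmul : ∀ s : ℝ, (s / 2) • G = s • A := fun s => by
    rw [hA, smul_smul, show (s:ℝ) * 2⁻¹ = s / 2 by ring]
  have hsmulT : ∀ s : ℝ, (s / 2) • Gᵀ = s • Aᵀ := fun s => by
    rw [hA, transpose_smul, smul_smul, show (s:ℝ) * 2⁻¹ = s / 2 by ring]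
  have hkey : A + Aᵀ = N * Nᵀ := by
    rw [hA, hG, transpose_smul, ← smul_add]
    simp only [transpose_sub, transpose_add, transpose_mul, transpose_transpose]
    module
  -- the entry linear map
  let L : Matrix (Fin ℓ) (Fin ℓ) ℝ →ₗ[ℝ] ℝ :=
    { toFun := fun M => M i j, map_add' := fun _ _ => rfl, map_smul' := fun _ _ => rfl }
  -- derivative of the matrix-valued function, applied entrywise
  have hD : ∀ s : ℝ,
      HasDerivAt (fun u : ℝ => ((NormedSpace.exp (u • A) *
          NormedSpace.exp (u • Aᵀ)) i j))
        ((NormedSpace.exp (s • A) * (N * Nᵀ) * NormedSpace.exp (s • Aᵀ)) i j) s := by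
    intro s
    have h1 := hasDerivAt_exp_smul_const A s
    have h2 := hasDerivAt_exp_smul_const' Aᵀ s
    have hm := h1.mul h2
    have heq : NormedSpace.exp (s • A) * A * NormedSpace.exp (s • Aᵀ) +
        NormedSpace.exp (s • A) * (Aᵀ * NormedSpace.exp (s • Aᵀ)) =
        NormedSpace.exp (s • A) * (N * Nᵀ) * NormedSpace.exp (s • Aᵀ) := by
      rw [← hkey]; noncomm_ring
    replace hm := hm.congr_deriv heq
    exact (L.toContinuousLinearMap.hasFDerivAt.comp_hasDerivAt s hm)
  have hcont : Continuous (fun s : ℝ =>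
      (NormedSpace.exp (s • A) * (N * Nᵀ) * NormedSpace.exp (s • Aᵀ)) i j) := by
    have c1 : Continuous (fun s : ℝ => NormedSpace.exp (s • A)) :=
      NormedSpace.exp_continuous.comp (continuous_id.smul continuous_const)
    have c2 : Continuous (fun s : ℝ => NormedSpace.exp (s • Aᵀ)) :=
      NormedSpace.exp_continuous.comp (continuous_id.smul continuous_const)
    exact (L.toContinuousLinearMap.continuous.comp ((c1.mul continuous_const).mul c2))
  have hftc := intervalIntegral.integral_eq_sub_of_hasDerivAt
      (f := fun u : ℝ => ((NormedSpace.exp (u • A) * NormedSpace.exp (u • Aᵀ)) i j))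
      (a := (0 : ℝ)) (b := t)
      (fun s _ => hD s) (hcont.intervalIntegrable 0 t)
  simp only [hsmul, hsmulT]
  rw [hftc]
  simp [Matrix.sub_apply, NormedSpace.exp_zero, Matrix.one_apply]

end Aux
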